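/- Let M and M' be topological spaces, V ⊆ M an open subset, p : M → ℝ a continuous function with p ≥ 0, and π : M' → M a continuous map such that the image π(π⁻¹(V)) is dense in V. If f : V → ℂ is continuous and the composite f ∘ π : π⁻¹(V) → ℂ has (p ∘ π)-bounded growth relative to M', then f has p-bounded growth relative to M. (This is the converse direction of Lemma 7.2 of the paper.) -/

import Mathlib

/-- A function `f : V → ℂ` has `p`-bounded growth relative to `M` if there exists `a > 0`
such that `x ↦ p(x)^a * |f(x)|` is bounded on `V`. -/
def HasPBoundedGrowth {M : Type*} {V : Set M} (p : M → ℝ) (f : V → ℂ) : Prop :=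
  ∃ a : ℝ, 0 < a ∧ ∃ C : ℝ, ∀ x : V, p (x : M) ^ a * ‖f x‖ ≤ C

/-- Converse direction of Lemma 7.2: if `f` is continuous, `π : M' → M` is continuous and
`π (π⁻¹ V)` is dense in `V`, then `p ∘ π`-bounded growth of `f ∘ π` implies `p`-bounded
growth of `f`. -/
theorem pBoundedGrowth_of_comp {M M' : Type*} [TopologicalSpace M] [TopologicalSpace M']
    (V : Set M) (hV : IsOpen V) (p : M → ℝ) (hp : Continuous p) (hp0 : ∀ x, 0 ≤ p x)
    (π : M' → M) (hπ : Continuous π)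
    (hdense : ∀ v ∈ V, v ∈ closure (π '' (π ⁻¹' V)))
    (f : V → ℂ) (hf : Continuous f)
    (h : HasPBoundedGrowth (p ∘ π) (fun x : π ⁻¹' V => f ⟨π (x : M'), x.2⟩)) :
    HasPBoundedGrowth p f := by
  obtain ⟨a, ha, C, hC⟩ := h
  refine ⟨a, ha, C, ?_⟩
  -- g is continuous on V
  have hrpow : Continuous fun t : ℝ => t ^ a := by
    rw [continuous_iff_continuousAt]
    exact fun t => Real.continuousAt_rpow_const t a (Or.inr ha.le)
  set g : V → ℝ := fun x => p (x : M) ^ a * ‖f x‖ with hg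
  have hgc : Continuous g :=
    (hrpow.comp (hp.comp continuous_subtype_val)).mul (continuous_norm.comp hf)
  have hclosed : IsClosed {x : V | g x ≤ C} := isClosed_le hgc continuous_const
  set S : Set V := {x : V | (x : M) ∈ π '' (π ⁻¹' V)} with hS
  have hSsub : S ⊆ {x : V | g x ≤ C} := by
    rintro ⟨v, hv⟩ ⟨y, hyV, hyv⟩
    have := hC ⟨y, hyV⟩
    simp only [Function.comp] at this
    have hfeq : f ⟨π y, hyV⟩ = f ⟨v, hv⟩ := by
      congr 1
      exact Subtype.ext hyv
    simpa [g, hyv, hfeq] using this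
  intro x
  have hx : x ∈ closure S := by
    have h1 : (x : M) ∈ closure (π '' (π ⁻¹' V)) := hdense x x.2
    rw [closure_subtype]
    have : (Subtype.val '' S : Set M) = π '' (π ⁻¹' V) ∩ V := by
      ext v
      constructor
      · rintro ⟨⟨w, hw⟩, hwS, rfl⟩; exact ⟨hwS, hw⟩
      · rintro ⟨hv1, hv2⟩; exact ⟨⟨v, hv2⟩, hv1, rfl⟩
    rw [this]
    -- x ∈ closure (π '' (π⁻¹ V) ∩ V); since V is open and x ∈ V
    have hnb : V ∈ nhds (x : M) := hV.mem_nhds x.2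
    rw [mem_closure_iff_nhds] at h1 ⊢
    intro t ht
    obtain ⟨z, hz1, hz2⟩ := h1 (t ∩ V) (Filter.inter_mem ht hnb)
    exact ⟨z, hz1.1, hz2, hz1.2⟩
  have := hclosed.closure_subset_iff.mpr hSsub hx
  simpa [g] using this
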